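/- In the submodular search game with modular Hider strategies, every equilibrium (optimal) Hider mixed strategy x lies in the scaled base polyhedron (1/f(S))·B(f), i.e., x(A) ≤ f(A)/f(S) for all A ⊆ S and x(S)=1. -/

import Mathlib

open Finset

def Submodular {n : ℕ} (f : Finset (Fin n) → ℝ) : Prop :=
  ∀ A B : Finset (Fin n), f (A ∪ B) + f (A ∩ B) ≤ f A + f B

def Supermodular {n : ℕ} (g : Finset (Fin n) → ℝ) : Prop :=
  ∀ A B : Finset (Fin n), g A + g B ≤ g (A ∪ B) + g (A ∩ B)

def MonotoneSet {n : ℕ} (f : Finset (Fin n) → ℝ) : Prop :=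
  ∀ A B : Finset (Fin n), A ⊆ B → f A ≤ f B

/-- The set of elements searched up to and including `j` under search `σ`
(where `σ k` is the element searched at position `k`). -/
def searchSegment {n : ℕ} (σ : Equiv.Perm (Fin n)) (j : Fin n) : Finset (Fin n) :=
  Finset.univ.filter (fun i => σ.symm i ≤ σ.symm j)

/-- Expected search searchCost. -/
def searchCost {n : ℕ} (f g : Finset (Fin n) → ℝ) (σ : Equiv.Perm (Fin n)) : ℝ :=
  ∑ j, (g (searchSegment σ j) - g (searchSegment σ j \ {j})) * f (searchSegment σ j)

def dual {n : ℕ} (g : Finset (Fin n) → ℝ) (A : Finset (Fin n)) : ℝ :=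
  g Finset.univ - g Aᶜ

def reversePerm {n : ℕ} (σ : Equiv.Perm (Fin n)) : Equiv.Perm (Fin n) :=
  (Fin.revPerm).trans σ

def InitialSegment {n : ℕ} (σ : Equiv.Perm (Fin n)) (A : Finset (Fin n)) : Prop :=
  ∀ i j : Fin n, j ∈ A → σ.symm i ≤ σ.symm j → i ∈ A


/-- Expected cost when the Searcher uses permutation `π` and the Hider hides at
`j` with probability `x j`. -/
def gamePayoff {n : ℕ} (f : Finset (Fin n) → ℝ) (π : Equiv.Perm (Fin n))
    (x : Fin n → ℝ) : ℝ :=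
  ∑ j, x j * f (searchSegment π j)


set_option maxHeartbeats 1600000

/-- set of elements in the first `k` positions of `σ`. -/
def prefSet {n : ℕ} (σ : Equiv.Perm (Fin n)) (k : ℕ) : Finset (Fin n) :=
  Finset.univ.filter (fun i => (σ.symm i : ℕ) < k)

lemma prefSet_zero {n : ℕ} (σ : Equiv.Perm (Fin n)) : prefSet σ 0 = ∅ := by
  ext i; simp [prefSet]

lemma prefSet_top {n : ℕ} (σ : Equiv.Perm (Fin n)) {k : ℕ} (h : n ≤ k) :
    prefSet σ k = Finset.univ := by
  ext i; simp only [prefSet, mem_filter, mem_univ, true_and, iff_true]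
  exact lt_of_lt_of_le (σ.symm i).isLt h

lemma prefSet_mono {n : ℕ} (σ : Equiv.Perm (Fin n)) {k l : ℕ} (h : k ≤ l) :
    prefSet σ k ⊆ prefSet σ l := by
  intro i hi
  simp only [prefSet, mem_filter, mem_univ, true_and] at hi ⊢
  omega

lemma seg_eq_prefSet {n : ℕ} (σ : Equiv.Perm (Fin n)) (j : Fin n) :
    searchSegment σ j = prefSet σ ((σ.symm j : ℕ) + 1) := by
  ext i
  simp only [searchSegment, prefSet, mem_filter, mem_univ, true_and, Fin.le_def]
  omega

lemma prefSet_succ {n : ℕ} (σ : Equiv.Perm (Fin n)) (k : Fin n) :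
    prefSet σ ((k : ℕ) + 1) = insert (σ k) (prefSet σ (k : ℕ)) ∧
      σ k ∉ prefSet σ (k : ℕ) := by
  constructor
  · ext i
    simp only [prefSet, mem_filter, mem_univ, true_and, mem_insert]
    constructor
    · intro h
      rcases Nat.lt_succ_iff_lt_or_eq.mp h with h | h
      · exact Or.inr h
      · left
        have : σ.symm i = k := Fin.ext h
        rw [← this, Equiv.apply_symm_apply]
    · rintro (rfl | h)
      · rw [Equiv.symm_apply_apply]; omega
      · omega
  · simp [prefSet]

/-- Master reindexing lemma: a hider-weighted sum over search segments as a
sum over positions, expressed through prefix cumulative masses. -/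
lemma sum_seg {n : ℕ} (σ : Equiv.Perm (Fin n)) (x : Fin n → ℝ)
    (B : Finset (Fin n)) (g : Finset (Fin n) → ℝ) :
    ∑ j ∈ B, x j * g (searchSegment σ j)
      = ∑ k ∈ Finset.range n,
        ((∑ j ∈ prefSet σ (k+1) ∩ B, x j) - ∑ j ∈ prefSet σ k ∩ B, x j)
          * g (prefSet σ (k+1)) := by
  classical
  have key : ∀ k : Fin n,
      ((∑ j ∈ prefSet σ ((k:ℕ)+1) ∩ B, x j) - ∑ j ∈ prefSet σ (k:ℕ) ∩ B, x j)
          * g (prefSet σ ((k:ℕ)+1))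
        = (if σ k ∈ B then x (σ k) else 0) * g (searchSegment σ (σ k)) := by
    intro k
    obtain ⟨hins, hnot⟩ := prefSet_succ σ k
    have hseg : searchSegment σ (σ k) = prefSet σ ((k:ℕ)+1) := by
      rw [seg_eq_prefSet]; simp
    rw [hseg, hins]
    by_cases hB : σ k ∈ B
    · have : insert (σ k) (prefSet σ (k:ℕ)) ∩ B = insert (σ k) (prefSet σ (k:ℕ) ∩ B) := by
        ext i
        simp only [mem_inter, mem_insert]
        constructor
        · rintro ⟨rfl | h, hb⟩
          · exact Or.inl rfl
          · exact Or.inr ⟨h, hb⟩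
        · rintro (rfl | ⟨h, hb⟩)
          · exact ⟨Or.inl rfl, hB⟩
          · exact ⟨Or.inr h, hb⟩
      rw [this, Finset.sum_insert (by simp only [mem_inter]; tauto)]
      simp [hB]
    · have : insert (σ k) (prefSet σ (k:ℕ)) ∩ B = prefSet σ (k:ℕ) ∩ B := by
        ext i; simp only [mem_inter, mem_insert]
        constructor
        · rintro ⟨rfl | h, hb⟩
          · exact absurd hb hB
          · exact ⟨h, hb⟩
        · tauto
      rw [this]; simp [hB]
  calc ∑ j ∈ B, x j * g (searchSegment σ j)
      = ∑ j, (if j ∈ B then x j else 0) * g (searchSegment σ j) := by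
        rw [← Finset.sum_filter_add_sum_filter_not Finset.univ (· ∈ B)]
        have h1 : Finset.univ.filter (· ∈ B) = B := by
          ext i; simp
        rw [h1]
        have h2 : ∑ j ∈ Finset.univ.filter (¬ · ∈ B),
            (if j ∈ B then x j else 0) * g (searchSegment σ j) = 0 := by
          apply Finset.sum_eq_zero
          intro j hj
          simp only [mem_filter, mem_univ, true_and] at hj
          simp [hj]
        rw [h2, add_zero]
        apply Finset.sum_congr rfl
        intro j hj
        simp [hj]
    _ = ∑ k : Fin n, (if σ k ∈ B then x (σ k) else 0) * g (searchSegment σ (σ k)) :=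
        (Equiv.sum_comp σ (fun j => (if j ∈ B then x j else 0) * g (searchSegment σ j))).symm
    _ = ∑ k : Fin n,
        ((∑ j ∈ prefSet σ ((k:ℕ)+1) ∩ B, x j) - ∑ j ∈ prefSet σ (k:ℕ) ∩ B, x j)
          * g (prefSet σ ((k:ℕ)+1)) := by
        apply Finset.sum_congr rfl
        intro k _
        exact (key k).symm
    _ = ∑ k ∈ Finset.range n,
        ((∑ j ∈ prefSet σ (k+1) ∩ B, x j) - ∑ j ∈ prefSet σ k ∩ B, x j)
          * g (prefSet σ (k+1)) :=
        Fin.sum_univ_eq_sum_range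
          (fun k => ((∑ j ∈ prefSet σ (k+1) ∩ B, x j) - ∑ j ∈ prefSet σ k ∩ B, x j)
            * g (prefSet σ (k+1))) n

/-- Abel summation. -/
lemma abel_sum (φ ψ : ℕ → ℝ) (n : ℕ) :
    ∑ k ∈ Finset.range n, (φ (k+1) - φ k) * ψ (k+1)
      = φ n * ψ n - φ 0 * ψ 0 - ∑ k ∈ Finset.range n, φ k * (ψ (k+1) - ψ k) := by
  have h : ∀ k, (φ (k+1) - φ k) * ψ (k+1)
      = (φ (k+1) * ψ (k+1) - φ k * ψ k) - φ k * (ψ (k+1) - ψ k) := by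
    intro k; ring
  calc ∑ k ∈ Finset.range n, (φ (k+1) - φ k) * ψ (k+1)
      = ∑ k ∈ Finset.range n, ((φ (k+1) * ψ (k+1) - φ k * ψ k) - φ k * (ψ (k+1) - ψ k)) :=
        Finset.sum_congr rfl (fun k _ => h k)
    _ = (∑ k ∈ Finset.range n, (φ (k+1) * ψ (k+1) - φ k * ψ k))
          - ∑ k ∈ Finset.range n, φ k * (ψ (k+1) - ψ k) := Finset.sum_sub_distrib _ _
    _ = φ n * ψ n - φ 0 * ψ 0 - ∑ k ∈ Finset.range n, φ k * (ψ (k+1) - ψ k) := by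
        rw [Finset.sum_range_sub (fun k => φ k * ψ k)]

/-- Sort key putting `A` first (each block in σ-order). -/
def frontKey {n : ℕ} (A : Finset (Fin n)) (σ : Equiv.Perm (Fin n)) (j : Fin n) : ℕ :=
  (if j ∈ A then 0 else n) + (σ.symm j : ℕ)

lemma frontKey_inj {n : ℕ} (A : Finset (Fin n)) (σ : Equiv.Perm (Fin n)) :
    Function.Injective (frontKey A σ) := by
  intro i j h
  have hi' : (σ.symm i : ℕ) < n := (σ.symm i).isLt
  have hj' : (σ.symm j : ℕ) < n := (σ.symm j).isLt
  have hij : (σ.symm i : ℕ) = (σ.symm j : ℕ) := by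
    unfold frontKey at h
    by_cases hi : i ∈ A <;> by_cases hj : j ∈ A <;> simp only [hi, hj, if_true, if_false,
      if_pos, if_neg, not_false_iff] at h <;> omega
  have : σ.symm i = σ.symm j := Fin.ext hij
  exact σ.symm.injective this

/-- The permutation searching `A` first (in σ-induced order), then the rest. -/
noncomputable def frontPerm {n : ℕ} (A : Finset (Fin n)) (σ : Equiv.Perm (Fin n)) :
    Equiv.Perm (Fin n) :=
  Tuple.sort (frontKey A σ)

lemma frontPerm_le_iff {n : ℕ} (A : Finset (Fin n)) (σ : Equiv.Perm (Fin n)) (i j : Fin n) :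
    (frontPerm A σ).symm i ≤ (frontPerm A σ).symm j ↔ frontKey A σ i ≤ frontKey A σ j := by
  set τ := frontPerm A σ with hτ
  have hmono : Monotone (frontKey A σ ∘ τ) := Tuple.monotone_sort (frontKey A σ)
  have hinj : Function.Injective (frontKey A σ ∘ τ) :=
    (frontKey_inj A σ).comp τ.injective
  have hsm : StrictMono (frontKey A σ ∘ τ) := hmono.strictMono_of_injective hinj
  constructor
  · intro h
    have := hsm.le_iff_le.mpr h
    simpa [Function.comp, Equiv.apply_symm_apply] using this
  · intro h
    apply hsm.le_iff_le.mp
    simpa [Function.comp, Equiv.apply_symm_apply] using h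

lemma frontPerm_seg_mem_of_mem {n : ℕ} (A : Finset (Fin n)) (σ : Equiv.Perm (Fin n))
    {j : Fin n} (hj : j ∈ A) :
    searchSegment (frontPerm A σ) j = searchSegment σ j ∩ A := by
  ext i
  simp only [searchSegment, mem_filter, mem_univ, true_and, mem_inter]
  rw [frontPerm_le_iff]
  unfold frontKey
  simp only [Fin.le_def]
  have hi' : (σ.symm i : ℕ) < n := (σ.symm i).isLt
  have hj' : (σ.symm j : ℕ) < n := (σ.symm j).isLt
  by_cases hi : i ∈ A
  · simp only [hi, hj, if_true, and_true]
    omega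
  · simp only [hi, hj, if_true, if_false, and_false, iff_false]
    omega

lemma frontPerm_seg_mem_of_not_mem {n : ℕ} (A : Finset (Fin n)) (σ : Equiv.Perm (Fin n))
    {j : Fin n} (hj : j ∉ A) :
    searchSegment (frontPerm A σ) j = searchSegment σ j ∪ A := by
  ext i
  simp only [searchSegment, mem_filter, mem_univ, true_and, mem_union]
  rw [frontPerm_le_iff]
  unfold frontKey
  simp only [Fin.le_def]
  have hi' : (σ.symm i : ℕ) < n := (σ.symm i).isLt
  have hj' : (σ.symm j : ℕ) < n := (σ.symm j).isLt
  by_cases hi : i ∈ A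
  · simp only [hi, hj, if_true, if_false, or_true, iff_true]
    omega
  · simp only [hi, hj, if_false, or_false]
    omega

lemma frontPerm_payoff {n : ℕ} (f : Finset (Fin n) → ℝ) (A : Finset (Fin n))
    (σ : Equiv.Perm (Fin n)) (x : Fin n → ℝ) :
    gamePayoff f (frontPerm A σ) x
      = (∑ j ∈ A, x j * f (searchSegment σ j ∩ A))
        + ∑ j ∈ Finset.univ.filter (· ∉ A), x j * f (searchSegment σ j ∪ A) := by
  classical
  unfold gamePayoff
  rw [← Finset.sum_filter_add_sum_filter_not Finset.univ (· ∈ A)]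
  congr 1
  · have h1 : Finset.univ.filter (· ∈ A) = A := by ext i; simp
    rw [h1]
    apply Finset.sum_congr rfl
    intro j hj
    rw [frontPerm_seg_mem_of_mem A σ hj]
  · apply Finset.sum_congr rfl
    intro j hj
    simp only [mem_filter, mem_univ, true_and] at hj
    rw [frontPerm_seg_mem_of_not_mem A σ hj]

lemma sum_zero_of_nonneg {α : Type*} {s : Finset α} {g : α → ℝ}
    (h0 : ∀ i ∈ s, 0 ≤ g i) (h1 : ∑ i ∈ s, g i ≤ 0) : ∀ i ∈ s, g i = 0 :=
  (Finset.sum_eq_zero_iff_of_nonneg h0).mp (le_antisymm h1 (Finset.sum_nonneg h0))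

lemma prod_tele (u w : ℕ → ℝ) (n : ℕ)
    (h : ∀ k < n, (u (k+1) - u k) * (w (k+1) - w k) = 0) :
    ∑ k ∈ Finset.range n, (w k * (u (k+1) - u k) + u k * (w (k+1) - w k))
      = u n * w n - u 0 * w 0 := by
  rw [← Finset.sum_range_sub (fun k => u k * w k)]
  apply Finset.sum_congr rfl
  intro k hk
  have hz := h k (Finset.mem_range.mp hk)
  have expand : u (k+1) * w (k+1) - u k * w k
      = w k * (u (k+1) - u k) + u k * (w (k+1) - w k)
        + (u (k+1) - u k) * (w (k+1) - w k) := by ring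
  rw [expand, hz, add_zero]

/-- Core structure lemma: at a best response, the cost structure is as if the
maximal max-density set `A` were searched first. -/
lemma br_structure {n : ℕ} (f : Finset (Fin n) → ℝ) (hf : Submodular f)
    (hfmono : MonotoneSet f) (hf0 : f ∅ = 0)
    (x : Fin n → ℝ) (hx0 : ∀ j, 0 ≤ x j)
    (A : Finset (Fin n)) (hA : A.Nonempty) (d : ℝ)
    (hdens : ∀ B : Finset (Fin n), B.Nonempty → ∑ j ∈ B, x j ≤ d * f B)
    (htight : ∑ j ∈ A, x j = d * f A)
    (hmaxl : ∀ B : Finset (Fin n), B.Nonempty → ∑ j ∈ B, x j = d * f B → B ⊆ A)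
    (σ : Equiv.Perm (Fin n))
    (hBR : ∀ π : Equiv.Perm (Fin n), gamePayoff f σ x ≤ gamePayoff f π x) :
    (∀ j ∈ A, x j * f (searchSegment σ j) = x j * f (searchSegment σ j ∩ A)) ∧
    (∀ j ∈ A, x j * f (searchSegment σ j ∪ A) = x j * f A) ∧
    (∀ j, j ∉ A → x j * f (searchSegment σ j) = x j * f (searchSegment σ j ∪ A)) := by
  classical
  set Ac : Finset (Fin n) := Finset.univ.filter (· ∉ A) with hAc
  have hmemAc : ∀ j : Fin n, j ∈ Ac ↔ j ∉ A := by intro j; simp [hAc]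
  -- abbreviations
  set P : ℕ → Finset (Fin n) := fun k => prefSet σ k with hP
  set u : ℕ → ℝ := fun k => f (P k ∩ A) with hu
  set w : ℕ → ℝ := fun k => f (P k ∪ A) with hw
  set X1 : ℕ → ℝ := fun k => ∑ j ∈ P k ∩ A, x j with hX1
  set X2 : ℕ → ℝ := fun k => ∑ j ∈ P k ∩ Ac, x j with hX2
  have hfnn : ∀ B : Finset (Fin n), 0 ≤ f B := by
    intro B
    have := hfmono ∅ B (Finset.empty_subset B)
    linarith [this, hf0.ge, hf0.le]
  -- boundary values
  have hP0 : P 0 = ∅ := prefSet_zero σ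
  have hPn : P n = Finset.univ := prefSet_top σ le_rfl
  have hu0 : u 0 = 0 := by simp [hu, hP0, hf0]
  have hun : u n = f A := by simp [hu, hPn]
  have hw0 : w 0 = f A := by simp [hw, hP0]
  have hwn : w n = f Finset.univ := by
    simp only [hw, hPn]
    congr 1
    exact Finset.union_eq_left.mpr (Finset.subset_univ A)
  have hX10 : X1 0 = 0 := by simp [hX1, hP0]
  have hX1n : X1 n = ∑ j ∈ A, x j := by simp [hX1, hPn]
  have hX20 : X2 0 = 0 := by simp [hX2, hP0]
  -- monotonicity of u, w
  have hdu : ∀ k, 0 ≤ u (k+1) - u k := by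
    intro k
    have : P k ∩ A ⊆ P (k+1) ∩ A :=
      Finset.inter_subset_inter (prefSet_mono σ (Nat.le_succ k)) le_rfl
    have := hfmono _ _ this
    dsimp [u]; linarith
  have hdw : ∀ k, 0 ≤ w (k+1) - w k := by
    intro k
    have : P k ∪ A ⊆ P (k+1) ∪ A :=
      Finset.union_subset_union (prefSet_mono σ (Nat.le_succ k)) le_rfl
    have := hfmono _ _ this
    dsimp [w]; linarith
  -- density bounds
  have hd1 : ∀ k, X1 k ≤ d * u k := by
    intro k
    by_cases hne : (P k ∩ A).Nonempty
    · exact hdens _ hne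
    · rw [Finset.not_nonempty_iff_eq_empty] at hne
      simp [hX1, hu, hne, hf0]
  have hXsplit : ∀ k, X2 k + ∑ j ∈ A, x j = ∑ j ∈ P k ∪ A, x j := by
    intro k
    have hdisj : Disjoint (P k ∩ Ac) A := by
      rw [Finset.disjoint_left]
      intro a ha haA
      rw [Finset.mem_inter, hmemAc a] at ha
      exact ha.2 haA
    rw [hX2, ← Finset.sum_union hdisj]
    congr 1
    ext i
    simp only [Finset.mem_union, Finset.mem_inter, hmemAc i]
    tauto
  have hd2 : ∀ k, X2 k ≤ d * w k - d * f A := by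
    intro k
    have hne : (P k ∪ A).Nonempty := hA.mono Finset.subset_union_right
    have := hdens _ hne
    have hs := hXsplit k
    rw [← hs] at this
    dsimp [w]
    linarith [htight]
  -- the six sums
  set SA : ℝ := ∑ j ∈ A, x j * f (searchSegment σ j) with hSA
  set SAi : ℝ := ∑ j ∈ A, x j * f (searchSegment σ j ∩ A) with hSAi
  set SAu : ℝ := ∑ j ∈ A, x j * f (searchSegment σ j ∪ A) with hSAu
  set SC : ℝ := ∑ j ∈ Ac, x j * f (searchSegment σ j) with hSC
  set SCu : ℝ := ∑ j ∈ Ac, x j * f (searchSegment σ j ∪ A) with hSCu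
  set SCi : ℝ := ∑ j ∈ Ac, x j * f (searchSegment σ j ∩ A) with hSCi
  -- payoff split
  have hsplit : gamePayoff f σ x = SA + SC := by
    rw [hSA, hSC, hAc, gamePayoff,
      ← Finset.sum_filter_add_sum_filter_not Finset.univ (· ∈ A)]
    congr 1
    apply Finset.sum_congr _ (fun _ _ => rfl)
    ext i; simp
  -- best response vs fronted permutation
  have hBRfront : SA + SC ≤ SAi + SCu := by
    have h := hBR (frontPerm A σ)
    rw [frontPerm_payoff f A σ x, hsplit] at h
    exact h
  -- reindexed/Abel'd expressions
  have hX2n : X2 n = ∑ j ∈ Ac, x j := by simp [hX2, hPn]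
  have hSCi' : SCi = ∑ k ∈ Finset.range n, (X2 (k+1) - X2 k) * u (k+1) := by
    rw [hSCi, sum_seg σ x Ac (fun s => f (s ∩ A))]
  have hSAu' : SAu = ∑ k ∈ Finset.range n, (X1 (k+1) - X1 k) * w (k+1) := by
    rw [hSAu, sum_seg σ x A (fun s => f (s ∪ A))]
  have hSCi2 : SCi = X2 n * f A - ∑ k ∈ Finset.range n, X2 k * (u (k+1) - u k) := by
    rw [hSCi', abel_sum X2 u n, hun, hX20, hu0]; ring
  have hSAu2 : SAu = X1 n * f Finset.univ
      - ∑ k ∈ Finset.range n, X1 k * (w (k+1) - w k) := by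
    rw [hSAu', abel_sum X1 w n, hwn, hX10]; ring
  -- pointwise submodularity, complement side, summed
  have hG1 : SCu - SC ≤ X2 n * f A - SCi := by
    have hsum : ∀ j ∈ Ac,
        x j * f (searchSegment σ j ∪ A) - x j * f (searchSegment σ j)
          ≤ x j * f A - x j * f (searchSegment σ j ∩ A) := by
      intro j _
      have h1 := hf (searchSegment σ j) A
      have h2 := hx0 j
      nlinarith [h1, h2]
    have := Finset.sum_le_sum hsum
    rw [Finset.sum_sub_distrib, Finset.sum_sub_distrib] at this
    calc SCu - SC ≤ (∑ j ∈ Ac, x j * f A) - SCi := by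
          rw [hSCu, hSC, hSCi]; exact this
      _ = X2 n * f A - SCi := by rw [hX2n, Finset.sum_mul]
  -- pointwise submodularity, A side, summed
  have hH1 : SAu - X1 n * f A ≤ SA - SAi := by
    have hsum : ∀ j ∈ A,
        x j * f (searchSegment σ j ∪ A) - x j * f A
          ≤ x j * f (searchSegment σ j) - x j * f (searchSegment σ j ∩ A) := by
      intro j _
      have h1 := hf (searchSegment σ j) A
      have h2 := hx0 j
      nlinarith [h1, h2]
    have := Finset.sum_le_sum hsum
    rw [Finset.sum_sub_distrib, Finset.sum_sub_distrib] at this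
    calc SAu - X1 n * f A = SAu - ∑ j ∈ A, x j * f A := by
          rw [hX1n, Finset.sum_mul]
      _ ≤ SA - SAi := by rw [hSAu, hSA, hSAi]; exact this
  -- product telescoping
  have hzero : ∀ k < n, (u (k+1) - u k) * (w (k+1) - w k) = 0 := by
    intro k hk
    obtain ⟨hins, -⟩ := prefSet_succ σ ⟨k, hk⟩
    by_cases he : σ ⟨k, hk⟩ ∈ A
    · have : P (k+1) ∪ A = P k ∪ A := by
        show prefSet σ (k+1) ∪ A = prefSet σ k ∪ A
        rw [hins, Finset.insert_union, Finset.insert_eq_of_mem (Finset.mem_union_right _ he)]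
      have hw' : w (k+1) = w k := by dsimp [w]; rw [this]
      rw [hw']; ring
    · have : P (k+1) ∩ A = P k ∩ A := by
        show prefSet σ (k+1) ∩ A = prefSet σ k ∩ A
        rw [hins, Finset.insert_inter_of_notMem he]
      have hu' : u (k+1) = u k := by dsimp [u]; rw [this]
      rw [hu']; ring
  have hprod : ∑ k ∈ Finset.range n,
      (w k * (u (k+1) - u k) + u k * (w (k+1) - w k)) = f A * f Finset.univ := by
    rw [prod_tele u w n hzero, hun, hwn, hu0, hw0]; ring
  have hprodsplit : (∑ k ∈ Finset.range n, w k * (u (k+1) - u k))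
      + ∑ k ∈ Finset.range n, u k * (w (k+1) - w k) = f A * f Finset.univ := by
    rw [← Finset.sum_add_distrib]; exact hprod
  have hsumdu : ∑ k ∈ Finset.range n, (u (k+1) - u k) = f A := by
    rw [Finset.sum_range_sub u, hun, hu0]; ring
  -- the middle quantity
  set s2 : ℝ := ∑ k ∈ Finset.range n, X2 k * (u (k+1) - u k) with hs2
  set M : ℝ := ∑ k ∈ Finset.range n, (d * w k - d * f A) * (u (k+1) - u k) with hM
  have h23 : s2 ≤ M := by
    apply Finset.sum_le_sum
    intro k _
    exact mul_le_mul_of_nonneg_right (hd2 k) (hdu k)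
  have hMval : M = d * f A * f Finset.univ - d * f A * f A
      - d * ∑ k ∈ Finset.range n, u k * (w (k+1) - w k) := by
    have e1 : M = d * (∑ k ∈ Finset.range n, w k * (u (k+1) - u k))
        - d * f A * ∑ k ∈ Finset.range n, (u (k+1) - u k) := by
      rw [hM, Finset.mul_sum, Finset.mul_sum, ← Finset.sum_sub_distrib]
      apply Finset.sum_congr rfl
      intro k _; ring
    rw [e1, hsumdu]
    have : ∑ k ∈ Finset.range n, w k * (u (k+1) - u k)
        = f A * f Finset.univ - ∑ k ∈ Finset.range n, u k * (w (k+1) - w k) := by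
      linarith [hprodsplit]
    rw [this]; ring
  have h45 : ∑ k ∈ Finset.range n, X1 k * (w (k+1) - w k)
      ≤ d * ∑ k ∈ Finset.range n, u k * (w (k+1) - w k) := by
    rw [Finset.mul_sum]
    apply Finset.sum_le_sum
    intro k _
    have := mul_le_mul_of_nonneg_right (hd1 k) (hdw k)
    linarith [this]
  -- assemble the cycle
  have cyc1 : SCu - SC ≤ s2 := by
    have : X2 n * f A - SCi = s2 := by rw [hSCi2]; ring
    linarith [hG1]
  have cyc2 : M ≤ SA - SAi := by
    have hxA : (∑ j ∈ A, x j) = d * f A := htight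
    have : M = X1 n * f Finset.univ - X1 n * f A
        - d * ∑ k ∈ Finset.range n, u k * (w (k+1) - w k) := by
      rw [hMval, hX1n, hxA]; try ring
    have h5 : X1 n * f Finset.univ - X1 n * f A
        - d * (∑ k ∈ Finset.range n, u k * (w (k+1) - w k)) ≤ SAu - X1 n * f A := by
      rw [hSAu2]; linarith [h45]
    linarith [hH1]
  have cyc3 : SA - SAi ≤ SCu - SC := by linarith [hBRfront]
  have hall : s2 = M := le_antisymm h23 (by linarith)
  -- termwise zero of the slack sum
  have key0 : ∑ k ∈ Finset.range n,
      ((d * w k - d * f A - X2 k) * (u (k+1) - u k)) = 0 := by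
    have : ∑ k ∈ Finset.range n, ((d * w k - d * f A - X2 k) * (u (k+1) - u k))
        = M - s2 := by
      rw [hM, hs2, ← Finset.sum_sub_distrib]
      apply Finset.sum_congr rfl
      intro k _; ring
    rw [this, hall]; ring
  have hterm : ∀ k ∈ Finset.range n,
      (d * w k - d * f A - X2 k) * (u (k+1) - u k) = 0 := by
    apply sum_zero_of_nonneg _ key0.le
    intro k _
    have h1 := hd2 k
    exact mul_nonneg (by linarith) (hdu k)
  -- s2 = 0
  have hs2zero : s2 = 0 := by
    rw [hs2]
    apply Finset.sum_eq_zero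
    intro k hk
    rcases mul_eq_zero.mp (hterm k hk) with h | h
    · -- P k ∪ A is tight, hence inside A, hence X2 k = 0
      have htight2 : ∑ j ∈ P k ∪ A, x j = d * f (P k ∪ A) := by
        have h1 := hXsplit k
        have h2 : X2 k = d * w k - d * f A := by linarith
        have : (∑ j ∈ P k ∪ A, x j) = d * w k - d * f A + d * f A := by
          rw [← h1, h2, htight]
        rw [this]; dsimp [w]; ring
      have hsub : P k ∪ A ⊆ A :=
        hmaxl (P k ∪ A) (hA.mono Finset.subset_union_right) htight2
      have hPA : P k ⊆ A := Finset.subset_union_left.trans hsub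
      have hempty : P k ∩ Ac = ∅ := by
        rw [Finset.eq_empty_iff_forall_notMem]
        intro i hi
        rw [Finset.mem_inter, hmemAc i] at hi
        exact hi.2 (hPA hi.1)
      have : X2 k = 0 := by rw [hX2]; dsimp only; rw [hempty, Finset.sum_empty]
      rw [this, zero_mul]
    · rw [h, mul_zero]
  -- G = 0 and conclusions
  have hGge : 0 ≤ SCu - SC := by
    rw [hSCu, hSC, ← Finset.sum_sub_distrib]
    apply Finset.sum_nonneg
    intro j _
    have := hfmono (searchSegment σ j) (searchSegment σ j ∪ A) Finset.subset_union_left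
    have h2 := hx0 j
    nlinarith
  have hGzero : SCu - SC = 0 := le_antisymm (by linarith [cyc1, hs2zero]) hGge
  have hHzero : SA - SAi = 0 := by
    have hle : SA - SAi ≤ 0 := by linarith [cyc3]
    have hge : 0 ≤ SA - SAi := by
      rw [hSA, hSAi, ← Finset.sum_sub_distrib]
      apply Finset.sum_nonneg
      intro j _
      have := hfmono (searchSegment σ j ∩ A) (searchSegment σ j) Finset.inter_subset_left
      have h2 := hx0 j
      nlinarith
    linarith
  have hH1zero : SAu - X1 n * f A = 0 := by
    have hle : SAu - X1 n * f A ≤ 0 := by linarith [hH1]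
    have hge : 0 ≤ SAu - X1 n * f A := by
      rw [hSAu, hX1n, Finset.sum_mul, ← Finset.sum_sub_distrib]
      apply Finset.sum_nonneg
      intro j _
      have := hfmono A (searchSegment σ j ∪ A) Finset.subset_union_right
      have h2 := hx0 j
      nlinarith
    linarith
  refine ⟨?_, ?_, ?_⟩
  · -- C1
    have hsum0 : ∑ j ∈ A,
        (x j * f (searchSegment σ j) - x j * f (searchSegment σ j ∩ A)) = 0 := by
      rw [Finset.sum_sub_distrib, ← hSA, ← hSAi]
      exact hHzero
    have hzer : ∀ j ∈ A,
        x j * f (searchSegment σ j) - x j * f (searchSegment σ j ∩ A) = 0 := by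
      apply sum_zero_of_nonneg _ hsum0.le
      intro j _
      have h1 := hfmono (searchSegment σ j ∩ A) (searchSegment σ j) Finset.inter_subset_left
      have h2 := mul_le_mul_of_nonneg_left h1 (hx0 j)
      linarith
    intro j hj
    have := hzer j hj
    linarith
  · -- C2
    have hsum0 : ∑ j ∈ A,
        (x j * f (searchSegment σ j ∪ A) - x j * f A) = 0 := by
      rw [Finset.sum_sub_distrib, ← hSAu]
      have hfa : ∑ j ∈ A, x j * f A = X1 n * f A := by rw [hX1n, Finset.sum_mul]
      rw [hfa]
      exact hH1zero
    have hzer : ∀ j ∈ A,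
        x j * f (searchSegment σ j ∪ A) - x j * f A = 0 := by
      apply sum_zero_of_nonneg _ hsum0.le
      intro j _
      have h1 := hfmono A (searchSegment σ j ∪ A) Finset.subset_union_right
      have h2 := mul_le_mul_of_nonneg_left h1 (hx0 j)
      linarith
    intro j hj
    have := hzer j hj
    linarith
  · -- C3
    have hsum0 : ∑ j ∈ Ac,
        (x j * f (searchSegment σ j ∪ A) - x j * f (searchSegment σ j)) = 0 := by
      rw [Finset.sum_sub_distrib, ← hSCu, ← hSC]
      exact hGzero
    have hzer : ∀ j ∈ Ac,
        x j * f (searchSegment σ j ∪ A) - x j * f (searchSegment σ j) = 0 := by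
      apply sum_zero_of_nonneg _ hsum0.le
      intro j _
      have h1 := hfmono (searchSegment σ j) (searchSegment σ j ∪ A) Finset.subset_union_left
      have h2 := mul_le_mul_of_nonneg_left h1 (hx0 j)
      linarith
    intro j hj
    have hj' : j ∈ Ac := (hmemAc j).mpr hj
    have := hzer j hj'
    linarith

lemma payoff_nonneg {n : ℕ} (f : Finset (Fin n) → ℝ) (hfnn : ∀ B, 0 ≤ f B)
    (π : Equiv.Perm (Fin n)) (z : Fin n → ℝ) (hz : ∀ j, 0 ≤ z j) :
    0 ≤ gamePayoff f π z :=
  Finset.sum_nonneg fun j _ => mul_nonneg (hz j) (hfnn _)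

lemma payoff_mix {n : ℕ} (f : Finset (Fin n) → ℝ) (π : Equiv.Perm (Fin n))
    (x y : Fin n → ℝ) (t : ℝ) :
    gamePayoff f π (fun j => (1 - t) * x j + t * y j)
      = (1 - t) * gamePayoff f π x + t * gamePayoff f π y := by
  unfold gamePayoff
  rw [Finset.mul_sum, Finset.mul_sum, ← Finset.sum_add_distrib]
  apply Finset.sum_congr rfl
  intro j _
  ring

lemma no_beating {n : ℕ} (f : Finset (Fin n) → ℝ) (hfnn : ∀ B, 0 ≤ f B)
    (x y : Fin n → ℝ) (hx0 : ∀ j, 0 ≤ x j) (hy0 : ∀ j, 0 ≤ y j)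
    (hx1 : ∑ j, x j = 1) (hy1 : ∑ j, y j = 1)
    (hopt : ∀ z : Fin n → ℝ, (∀ j, 0 ≤ z j) → ∑ j, z j = 1 →
      (⨅ π : Equiv.Perm (Fin n), gamePayoff f π z) ≤
        ⨅ π : Equiv.Perm (Fin n), gamePayoff f π x)
    (hbeat : ∀ σ : Equiv.Perm (Fin n),
      (∀ π : Equiv.Perm (Fin n), gamePayoff f σ x ≤ gamePayoff f π x) →
      gamePayoff f σ x < gamePayoff f σ y) :
    False := by
  classical
  haveI : Nonempty (Equiv.Perm (Fin n)) := ⟨1⟩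
  obtain ⟨σ₀, hσ₀⟩ := Finite.exists_min (fun π : Equiv.Perm (Fin n) => gamePayoff f π x)
  set V : ℝ := gamePayoff f σ₀ x with hV
  have hbdd : ∀ z : Fin n → ℝ, (∀ j, 0 ≤ z j) →
      BddBelow (Set.range fun π : Equiv.Perm (Fin n) => gamePayoff f π z) := by
    intro z hz
    exact ⟨0, by rintro _ ⟨π, rfl⟩; exact payoff_nonneg f hfnn π z hz⟩
  have hiInfx : (⨅ π : Equiv.Perm (Fin n), gamePayoff f π x) = V :=
    le_antisymm (ciInf_le (hbdd x hx0) σ₀) (le_ciInf hσ₀)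
  have hV0 : 0 ≤ V := payoff_nonneg f hfnn σ₀ x hx0
  -- margin above V for non-best-responses
  set T : Finset (Equiv.Perm (Fin n)) :=
    Finset.univ.filter (fun σ => V < gamePayoff f σ x) with hT
  obtain ⟨m₂, hm₂pos, hm₂⟩ :
      ∃ m₂ : ℝ, 0 < m₂ ∧ ∀ σ ∈ T, V + m₂ ≤ gamePayoff f σ x := by
    by_cases hTne : T.Nonempty
    · obtain ⟨σ₂, hσ₂T, hσ₂min⟩ :=
        Finset.exists_max_image T (fun σ => -(gamePayoff f σ x)) hTne
      refine ⟨gamePayoff f σ₂ x - V, ?_, ?_⟩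
      · have : V < gamePayoff f σ₂ x := by
          rw [hT] at hσ₂T
          simpa using (Finset.mem_filter.mp hσ₂T).2
        linarith
      · intro σ hσ
        have := hσ₂min σ hσ
        linarith
    · exact ⟨1, one_pos, fun σ hσ => absurd ⟨σ, hσ⟩ hTne⟩
  set t : ℝ := m₂ / (2 * (V + m₂)) with ht
  have hVm : 0 < V + m₂ := by linarith
  have ht0 : 0 < t := div_pos hm₂pos (by linarith)
  have ht1 : t < 1 := by
    rw [ht, div_lt_one (by linarith)]
    linarith
  have htm : t * (V + m₂) = m₂ / 2 := by
    rw [ht]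
    field_simp
  set z : Fin n → ℝ := fun j => (1 - t) * x j + t * y j with hz
  have hz0 : ∀ j, 0 ≤ z j := fun j =>
    add_nonneg (mul_nonneg (by linarith) (hx0 j)) (mul_nonneg ht0.le (hy0 j))
  have hz1 : ∑ j, z j = 1 := by
    rw [hz]
    rw [Finset.sum_add_distrib, ← Finset.mul_sum, ← Finset.mul_sum, hx1, hy1]
    ring
  have hclaim : ∀ π : Equiv.Perm (Fin n), V < gamePayoff f π z := by
    intro π
    have hmix := payoff_mix f π x y t
    rw [← hz] at hmix
    by_cases hπ : V < gamePayoff f π x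
    · have hπT : π ∈ T := by rw [hT]; simp [hπ]
      have h1 := hm₂ π hπT
      have h2 : 0 ≤ gamePayoff f π y := payoff_nonneg f hfnn π y hy0
      rw [hmix]
      have h3 : (1 - t) * (V + m₂) ≤ (1 - t) * gamePayoff f π x :=
        mul_le_mul_of_nonneg_left h1 (by linarith)
      have h4 : 0 ≤ t * gamePayoff f π y := mul_nonneg ht0.le h2
      nlinarith
    · have hVπ : gamePayoff f π x = V :=
        le_antisymm (not_lt.mp hπ) (hσ₀ π)
      have hBRπ : ∀ ρ : Equiv.Perm (Fin n), gamePayoff f π x ≤ gamePayoff f ρ x := by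
        intro ρ; rw [hVπ]; exact hσ₀ ρ
      have := hbeat π hBRπ
      rw [hmix, hVπ]
      nlinarith
  obtain ⟨σz, hσz⟩ := Finite.exists_min (fun π : Equiv.Perm (Fin n) => gamePayoff f π z)
  have hiInfz : (⨅ π : Equiv.Perm (Fin n), gamePayoff f π z) = gamePayoff f σz z :=
    le_antisymm (ciInf_le (hbdd z hz0) σz) (le_ciInf hσz)
  have := hopt z hz0 hz1
  rw [hiInfx, hiInfz] at this
  exact absurd (lt_of_lt_of_le (hclaim σz) this) (lt_irrefl V)

/-- Theorem 6: every equilibrium (maximin) Hider strategy lies in the scaled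
base polyhedron `(1/f(S)) B(f)`. -/
theorem hider_equilibrium_in_base_polyhedron {n : ℕ} (f : Finset (Fin n) → ℝ)
    (hf : Submodular f) (hfmono : MonotoneSet f) (hf0 : f ∅ = 0)
    (hfpos : ∀ A : Finset (Fin n), A.Nonempty → 0 < f A)
    (x : Fin n → ℝ) (hx0 : ∀ j, 0 ≤ x j) (hx1 : ∑ j, x j = 1)
    (hopt : ∀ y : Fin n → ℝ, (∀ j, 0 ≤ y j) → ∑ j, y j = 1 →
      (⨅ π : Equiv.Perm (Fin n), gamePayoff f π y) ≤
        ⨅ π : Equiv.Perm (Fin n), gamePayoff f π x) :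
    ∀ A : Finset (Fin n), ∑ j ∈ A, x j ≤ f A / f Finset.univ := by
  classical
  intro A₀
  by_contra hcon
  push_neg at hcon
  have hfnn : ∀ B : Finset (Fin n), 0 ≤ f B := by
    intro B
    have := hfmono ∅ B (Finset.empty_subset B)
    linarith [hf0.le, hf0.ge]
  have hA₀ne : A₀.Nonempty := by
    rcases Finset.eq_empty_or_nonempty A₀ with rfl | h
    · rw [Finset.sum_empty, hf0, zero_div] at hcon
      exact absurd hcon (lt_irrefl 0)
    · exact h
  have huniv : (Finset.univ : Finset (Fin n)).Nonempty :=
    ⟨hA₀ne.choose, Finset.mem_univ _⟩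
  have hF : 0 < f Finset.univ := hfpos _ huniv
  have hfA₀ : 0 < f A₀ := hfpos _ hA₀ne
  -- maximal maximum-density set A
  set dens : Finset (Fin n) → ℝ := fun B => (∑ j ∈ B, x j) / f B with hdens_def
  set 𝒞 : Finset (Finset (Fin n)) :=
    Finset.univ.powerset.filter (fun B => B.Nonempty) with h𝒞
  have hmem𝒞 : ∀ B : Finset (Fin n), B ∈ 𝒞 ↔ B.Nonempty := by
    intro B; simp [h𝒞]
  have h𝒞ne : 𝒞.Nonempty := ⟨A₀, (hmem𝒞 A₀).mpr hA₀ne⟩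
  obtain ⟨A₁, hA₁mem, hA₁max⟩ := Finset.exists_max_image 𝒞 dens h𝒞ne
  set d : ℝ := dens A₁ with hd_def
  set 𝒟 : Finset (Finset (Fin n)) := 𝒞.filter (fun B => dens B = d) with h𝒟
  have h𝒟ne : 𝒟.Nonempty := ⟨A₁, Finset.mem_filter.mpr ⟨hA₁mem, rfl⟩⟩
  obtain ⟨A, hAmem, hAcard⟩ := Finset.exists_max_image 𝒟 (fun B => B.card) h𝒟ne
  have hA𝒟 := Finset.mem_filter.mp hAmem
  have hAne : A.Nonempty := (hmem𝒞 A).mp hA𝒟.1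
  have hdensA : dens A = d := hA𝒟.2
  have hfA : 0 < f A := hfpos A hAne
  have hdens : ∀ B : Finset (Fin n), B.Nonempty → ∑ j ∈ B, x j ≤ d * f B := by
    intro B hB
    have h1 : dens B ≤ d := hA₁max B ((hmem𝒞 B).mpr hB)
    rw [hdens_def] at h1
    have h2 := hfpos B hB
    calc ∑ j ∈ B, x j = (∑ j ∈ B, x j) / f B * f B := by field_simp
      _ ≤ d * f B := mul_le_mul_of_nonneg_right h1 h2.le
  have htight : ∑ j ∈ A, x j = d * f A := by
    have := hdensA
    rw [hdens_def] at this
    field_simp at this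
    linarith [this]
  have hd1F : 1 / f Finset.univ < d := by
    have h1 : 1 / f Finset.univ < dens A₀ := by
      rw [hdens_def]
      rw [div_lt_div_iff₀ hF hfA₀]
      rw [div_lt_iff₀ hF] at hcon
      linarith
    exact lt_of_lt_of_le h1 (hA₁max A₀ ((hmem𝒞 A₀).mpr hA₀ne))
  have hd0 : 0 < d := lt_trans (by positivity) hd1F
  have hmaxl : ∀ B : Finset (Fin n), B.Nonempty → ∑ j ∈ B, x j = d * f B → B ⊆ A := by
    intro B hB htightB
    have hABne : (A ∪ B).Nonempty := hAne.mono Finset.subset_union_left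
    have h1 : ∑ j ∈ A ∪ B, x j ≤ d * f (A ∪ B) := hdens _ hABne
    have h2 : (∑ j ∈ A ∪ B, x j) + ∑ j ∈ A ∩ B, x j
        = (∑ j ∈ A, x j) + ∑ j ∈ B, x j := Finset.sum_union_inter
    have h3 : ∑ j ∈ A ∩ B, x j ≤ d * f (A ∩ B) := by
      rcases Finset.eq_empty_or_nonempty (A ∩ B) with he | hne
      · rw [he, Finset.sum_empty, hf0, mul_zero]
      · exact hdens _ hne
    have h4 := hf A B
    have h5 : d * (f (A ∪ B) + f (A ∩ B)) ≤ d * (f A + f B) :=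
      mul_le_mul_of_nonneg_left h4 hd0.le
    have heq : ∑ j ∈ A ∪ B, x j = d * f (A ∪ B) := by
      nlinarith [htight, htightB]
    have hdensAB : dens (A ∪ B) = d := by
      rw [hdens_def]
      dsimp only
      rw [heq, mul_div_assoc, div_self (hfpos _ hABne).ne', mul_one]
    have hABmem : A ∪ B ∈ 𝒟 :=
      Finset.mem_filter.mpr ⟨(hmem𝒞 _).mpr hABne, hdensAB⟩
    have hcard := hAcard (A ∪ B) hABmem
    have : A = A ∪ B := Finset.eq_of_subset_of_card_le Finset.subset_union_left hcard
    intro b hb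
    rw [this]
    exact Finset.mem_union_right A hb
  set q : ℝ := ∑ j ∈ A, x j with hq_def
  have hq0 : 0 < q := by rw [htight]; positivity
  have hq1 : q ≤ 1 := by
    rw [hq_def, ← hx1]
    
    exact Finset.sum_le_sum_of_subset_of_nonneg (Finset.subset_univ A)
      (fun i _ _ => hx0 i)
  have hcsum : ∑ j ∈ Finset.univ.filter (· ∉ A), x j = 1 - q := by
    have hsplit := Finset.sum_filter_add_sum_filter_not Finset.univ (· ∈ A) x
    have hfilA : Finset.univ.filter (· ∈ A) = A := by ext i; simp
    rw [hfilA, hx1] at hsplit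
    rw [hq_def]
    linarith
  by_cases hqlt : q < 1
  · -- Case q < 1 : deviation = x conditioned on the complement of A
    have h1q : 0 < 1 - q := by linarith
    set y : Fin n → ℝ := fun j => if j ∈ A then 0 else x j / (1 - q) with hy_def
    have hy0 : ∀ j, 0 ≤ y j := by
      intro j
      rw [hy_def]
      dsimp only
      split
      · exact le_rfl
      · exact div_nonneg (hx0 j) h1q.le
    have hy1 : ∑ j, y j = 1 := by
      rw [hy_def]
      rw [← Finset.sum_filter_add_sum_filter_not Finset.univ (· ∈ A)]
      have e1 : ∑ j ∈ Finset.univ.filter (· ∈ A),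
          (if j ∈ A then 0 else x j / (1-q)) = 0 := by
        apply Finset.sum_eq_zero
        intro j hj
        simp only [Finset.mem_filter] at hj
        simp [hj.2]
      have e2 : ∑ j ∈ Finset.univ.filter (· ∉ A),
          (if j ∈ A then 0 else x j / (1-q))
            = (∑ j ∈ Finset.univ.filter (· ∉ A), x j) / (1-q) := by
        rw [Finset.sum_div]
        apply Finset.sum_congr rfl
        intro j hj
        simp only [Finset.mem_filter] at hj
        simp [hj.2]
      rw [e1, e2, hcsum, zero_add, div_self h1q.ne']
    apply no_beating f hfnn x y hx0 hy0 hx1 hy1 hopt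
    intro σ hBRσ
    obtain ⟨C1, C2, C3⟩ := br_structure f hf hfmono hf0 x hx0 A hAne d hdens htight hmaxl σ hBRσ
    -- payoff of y
    have hpy : gamePayoff f σ y
        = (∑ j ∈ Finset.univ.filter (· ∉ A), x j * f (searchSegment σ j)) / (1 - q) := by
      unfold gamePayoff
      rw [← Finset.sum_filter_add_sum_filter_not Finset.univ (· ∈ A)]
      have e1 : ∑ j ∈ Finset.univ.filter (· ∈ A), y j * f (searchSegment σ j) = 0 := by
        apply Finset.sum_eq_zero
        intro j hj
        simp only [Finset.mem_filter] at hj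
        rw [hy_def]
        simp [hj.2]
      rw [e1, zero_add, Finset.sum_div]
      apply Finset.sum_congr rfl
      intro j hj
      simp only [Finset.mem_filter] at hj
      rw [hy_def]
      dsimp only
      rw [if_neg hj.2]
      ring
    -- payoff of x split
    have hpx : gamePayoff f σ x
        = (∑ j ∈ A, x j * f (searchSegment σ j))
          + ∑ j ∈ Finset.univ.filter (· ∉ A), x j * f (searchSegment σ j) := by
      unfold gamePayoff
      rw [← Finset.sum_filter_add_sum_filter_not Finset.univ (· ∈ A)]
      congr 1
      apply Finset.sum_congr _ (fun _ _ => rfl)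
      ext i; simp
    -- bound SA
    have hSAle : ∑ j ∈ A, x j * f (searchSegment σ j) ≤ q * f A := by
      calc ∑ j ∈ A, x j * f (searchSegment σ j)
          = ∑ j ∈ A, x j * f (searchSegment σ j ∩ A) :=
            Finset.sum_congr rfl (fun j hj => C1 j hj)
        _ ≤ ∑ j ∈ A, x j * f A := by
            apply Finset.sum_le_sum
            intro j _
            exact mul_le_mul_of_nonneg_left
              (hfmono _ _ Finset.inter_subset_right) (hx0 j)
        _ = q * f A := by rw [← Finset.sum_mul, hq_def]
    -- SC structure
    set W : ℝ := ∑ j ∈ Finset.univ.filter (· ∉ A),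
      x j * (f (searchSegment σ j ∪ A) - f A) with hW_def
    have hSCeq : ∑ j ∈ Finset.univ.filter (· ∉ A), x j * f (searchSegment σ j)
        = (1 - q) * f A + W := by
      have e1 : ∀ j ∈ Finset.univ.filter (· ∉ A),
          x j * f (searchSegment σ j)
            = x j * f A + x j * (f (searchSegment σ j ∪ A) - f A) := by
        intro j hj
        simp only [Finset.mem_filter] at hj
        rw [C3 j hj.2]
        ring
      rw [Finset.sum_congr rfl e1, Finset.sum_add_distrib, ← Finset.sum_mul, hcsum, hW_def]
    have hW0 : 0 ≤ W := by
      rw [hW_def]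
      apply Finset.sum_nonneg
      intro j _
      have := hfmono A (searchSegment σ j ∪ A) Finset.subset_union_right
      exact mul_nonneg (hx0 j) (by linarith)
    have hWpos : 0 < W := by
      rcases lt_or_eq_of_le hW0 with h | h
      · exact h
      · exfalso
        have hterm := sum_zero_of_nonneg
          (s := Finset.univ.filter (· ∉ A))
          (g := fun j => x j * (f (searchSegment σ j ∪ A) - f A))
          (fun j _ => by
            have := hfmono A (searchSegment σ j ∪ A) Finset.subset_union_right
            exact mul_nonneg (hx0 j) (by linarith))
          (by rw [← hW_def, ← h])
        -- find the last positive-mass element outside A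
        set Q : Finset (Fin n) := Finset.univ.filter (fun j => j ∉ A ∧ x j ≠ 0) with hQ_def
        have hQne : Q.Nonempty := by
          by_contra hemp
          rw [Finset.not_nonempty_iff_eq_empty] at hemp
          have : ∑ j ∈ Finset.univ.filter (· ∉ A), x j = 0 := by
            apply Finset.sum_eq_zero
            intro j hj
            simp only [Finset.mem_filter] at hj
            by_contra hxj
            have : j ∈ Q := by
              rw [hQ_def]; simp only [Finset.mem_filter]
              exact ⟨Finset.mem_univ j, hj.2, hxj⟩
            rw [hemp] at this
            exact absurd this (Finset.notMem_empty j)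
          rw [hcsum] at this
          linarith
        obtain ⟨j₀, hj₀Q, hj₀max⟩ :=
          Finset.exists_max_image Q (fun j => (σ.symm j : ℕ)) hQne
        have hj₀' : j₀ ∉ A ∧ x j₀ ≠ 0 := by
          rw [hQ_def] at hj₀Q
          simpa using hj₀Q
        have hfB : f (searchSegment σ j₀ ∪ A) = f A := by
          have := hterm j₀ (by simp [hj₀'.1])
          rcases mul_eq_zero.mp this with h' | h'
          · exact absurd h' hj₀'.2
          · linarith
        have hxB : ∑ j ∈ searchSegment σ j₀ ∪ A, x j = 1 := by
          rw [← hx1]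
          apply Finset.sum_subset (Finset.subset_univ _)
          intro i _ hiB
          by_contra hxi
          have hiA : i ∉ A := fun hiA => hiB (Finset.mem_union_right _ hiA)
          have hiQ : i ∈ Q := by
            rw [hQ_def]; simp only [Finset.mem_filter]
            exact ⟨Finset.mem_univ i, hiA, hxi⟩
          have hle := hj₀max i hiQ
          have : i ∈ searchSegment σ j₀ := by
            simp only [searchSegment, Finset.mem_filter, Finset.mem_univ, true_and]
            exact Fin.le_def.mpr hle
          exact hiB (Finset.mem_union_left _ this)
        have hBle := hdens (searchSegment σ j₀ ∪ A)
          (hAne.mono Finset.subset_union_right)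
        rw [hxB, hfB] at hBle
        linarith [hBle, hqlt, htight]
    -- final strict comparison
    rw [hpx, hpy, hSCeq]
    rw [lt_div_iff₀ h1q]
    nlinarith [mul_pos hq0 hWpos, mul_le_mul_of_nonneg_right hSAle h1q.le, hfnn A]
  · -- Case q = 1 : all mass inside A; deviate to a point outside with positive marginal
    have hq1' : q = 1 := le_antisymm hq1 (not_lt.mp hqlt)
    have hoff : ∀ j, j ∉ A → x j = 0 := by
      have hz : ∑ j ∈ Finset.univ.filter (· ∉ A), x j ≤ 0 := by
        rw [hcsum, hq1']; norm_num
      have := sum_zero_of_nonneg (s := Finset.univ.filter (· ∉ A)) (g := x)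
        (fun j _ => hx0 j) hz
      intro j hj
      exact this j (by simp [hj])
    obtain ⟨b, hbA, hfb⟩ : ∃ b, b ∉ A ∧ f A < f (insert b A) := by
      by_contra hball
      push_neg at hball
      have hflat : ∀ C : Finset (Fin n), f (A ∪ C) = f A := by
        intro C
        induction C using Finset.induction_on with
        | empty => rw [Finset.union_empty]
        | @insert c C hcC ih =>
          by_cases hcA : c ∈ A
          · have he : A ∪ insert c C = A ∪ C := by
              ext i
              simp only [Finset.mem_union, Finset.mem_insert]
              constructor
              · rintro (h | rfl | h)
                · exact Or.inl h
                · exact Or.inl hcA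
                · exact Or.inr h
              · rintro (h | h)
                · exact Or.inl h
                · exact Or.inr (Or.inr h)
            rw [he, ih]
          · have hcAC : c ∉ A ∪ C := by
              rw [Finset.mem_union]; push_neg; exact ⟨hcA, hcC⟩
            have h1 : insert c A ∪ (A ∪ C) = A ∪ insert c C := by
              ext i
              simp only [Finset.mem_union, Finset.mem_insert]
              constructor
              · rintro ((rfl | h) | h | h)
                · exact Or.inr (Or.inl rfl)
                · exact Or.inl h
                · exact Or.inl h
                · exact Or.inr (Or.inr h)
              · rintro (h | rfl | h)
                · exact Or.inl (Or.inr h)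
                · exact Or.inl (Or.inl rfl)
                · exact Or.inr (Or.inr h)
            have h2 : insert c A ∩ (A ∪ C) = A := by
              ext i
              simp only [Finset.mem_inter, Finset.mem_insert, Finset.mem_union]
              constructor
              · rintro ⟨rfl | hiA, hi2⟩
                · exact absurd hi2 (by rw [Finset.mem_union] at hcAC; exact hcAC)
                · exact hiA
              · intro hiA
                exact ⟨Or.inr hiA, Or.inl hiA⟩
            have key := hf (insert c A) (A ∪ C)
            rw [h1, h2] at key
            have h3 := hball c hcA
            have h4 : f (A ∪ C) ≤ f (A ∪ insert c C) := by
              apply hfmono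
              apply Finset.union_subset_union le_rfl
              exact Finset.subset_insert c C
            linarith [ih]
      have hflatuniv : f Finset.univ = f A := by
        have := hflat Finset.univ
        rwa [Finset.union_eq_right.mpr (Finset.subset_univ A)] at this
      have hdF : 1 < d * f Finset.univ := by
        rw [div_lt_iff₀ hF] at hd1F
        linarith
      rw [hflatuniv] at hdF
      linarith [htight, hq1']
    set y : Fin n → ℝ := fun j => if j = b then (1:ℝ) else 0 with hy_def
    have hy0 : ∀ j, 0 ≤ y j := by
      intro j
      rw [hy_def]
      dsimp only
      split <;> norm_num
    have hy1 : ∑ j, y j = 1 := by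
      rw [hy_def]
      simp
    apply no_beating f hfnn x y hx0 hy0 hx1 hy1 hopt
    intro σ hBRσ
    obtain ⟨C1, C2, C3⟩ := br_structure f hf hfmono hf0 x hx0 A hAne d hdens htight hmaxl σ hBRσ
    have hpy : gamePayoff f σ y = f (searchSegment σ b) := by
      unfold gamePayoff
      rw [hy_def]
      rw [Finset.sum_eq_single b]
      · simp
      · intro j _ hjb
        dsimp only
        rw [if_neg hjb, zero_mul]
      · intro h
        exact absurd (Finset.mem_univ b) h
    set Q : Finset (Fin n) := Finset.univ.filter (fun j => x j ≠ 0) with hQ_def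
    have hQne : Q.Nonempty := by
      by_contra hemp
      rw [Finset.not_nonempty_iff_eq_empty] at hemp
      have hzz : ∑ j, x j = 0 := by
        apply Finset.sum_eq_zero
        intro j _
        by_contra hxj
        have : j ∈ Q := by rw [hQ_def]; simp [hxj]
        rw [hemp] at this
        exact absurd this (Finset.notMem_empty j)
      rw [hx1] at hzz
      norm_num at hzz
    obtain ⟨j₁, hj₁Q, hj₁max⟩ := Finset.exists_max_image Q (fun j => (σ.symm j : ℕ)) hQne
    have hxj₁ : x j₁ ≠ 0 := by
      rw [hQ_def] at hj₁Q
      simpa using hj₁Q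
    have hj₁A : j₁ ∈ A := by
      by_contra h
      exact hxj₁ (hoff j₁ h)
    have hfSegA : f (searchSegment σ j₁ ∪ A) = f A :=
      mul_left_cancel₀ hxj₁ (C2 j₁ hj₁A)
    have hbj₁ : (σ.symm j₁ : ℕ) < (σ.symm b : ℕ) := by
      by_contra hle
      push_neg at hle
      have hbSeg : b ∈ searchSegment σ j₁ := by
        simp only [searchSegment, Finset.mem_filter, Finset.mem_univ, true_and, Fin.le_def]
        exact hle
      have hsub : insert b A ⊆ searchSegment σ j₁ ∪ A := by
        intro i hi
        rcases Finset.mem_insert.mp hi with rfl | hiA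
        · exact Finset.mem_union_left _ hbSeg
        · exact Finset.mem_union_right _ hiA
      have := hfmono _ _ hsub
      rw [hfSegA] at this
      linarith [hfb]
    have hpxle : gamePayoff f σ x ≤ f (searchSegment σ j₁) := by
      unfold gamePayoff
      calc ∑ j, x j * f (searchSegment σ j)
          ≤ ∑ j, x j * f (searchSegment σ j₁) := by
            apply Finset.sum_le_sum
            intro j _
            by_cases hxj : x j = 0
            · rw [hxj, zero_mul, zero_mul]
            · have hjQ : j ∈ Q := by rw [hQ_def]; simp [hxj]
              have hle := hj₁max j hjQ
              have hsub : searchSegment σ j ⊆ searchSegment σ j₁ := by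
                intro i hi
                simp only [searchSegment, Finset.mem_filter, Finset.mem_univ,
                  true_and, Fin.le_def] at hi ⊢
                omega
              exact mul_le_mul_of_nonneg_left (hfmono _ _ hsub) (hx0 j)
        _ = f (searchSegment σ j₁) := by rw [← Finset.sum_mul, hx1, one_mul]
    have hbX : b ∉ searchSegment σ j₁ := by
      simp only [searchSegment, Finset.mem_filter, Finset.mem_univ, true_and, Fin.le_def]
      omega
    have hkey : f (searchSegment σ j₁) < f (searchSegment σ b) := by
      have h1 : insert b (searchSegment σ j₁) ∪ (searchSegment σ j₁ ∪ A)
          = insert b (searchSegment σ j₁ ∪ A) := by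
        ext i
        simp only [Finset.mem_union, Finset.mem_insert]
        tauto
      have h2 : insert b (searchSegment σ j₁) ∩ (searchSegment σ j₁ ∪ A)
          = searchSegment σ j₁ := by
        ext i
        simp only [Finset.mem_inter, Finset.mem_insert, Finset.mem_union]
        constructor
        · rintro ⟨rfl | hiX, hi2⟩
          · rcases hi2 with h | h
            · exact absurd h hbX
            · exact absurd h hbA
          · exact hiX
        · intro hiX
          exact ⟨Or.inr hiX, Or.inl hiX⟩
      have key := hf (insert b (searchSegment σ j₁)) (searchSegment σ j₁ ∪ A)
      rw [h1, h2] at key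
      have h3 : f (insert b A) ≤ f (insert b (searchSegment σ j₁ ∪ A)) :=
        hfmono _ _ (Finset.insert_subset_insert b Finset.subset_union_right)
      have h4 : f (searchSegment σ j₁) < f (insert b (searchSegment σ j₁)) := by
        linarith [hfSegA, hfb]
      have hsub1 : insert b (searchSegment σ j₁) ⊆ searchSegment σ b := by
        intro i hi
        rcases Finset.mem_insert.mp hi with rfl | hiX
        · simp [searchSegment]
        · simp only [searchSegment, Finset.mem_filter, Finset.mem_univ,
            true_and, Fin.le_def] at hiX ⊢
          omega
      exact lt_of_lt_of_le h4 (hfmono _ _ hsub1)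
    rw [hpy]
    linarith [hpxle, hkey]
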